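/- If a weighted n-vertex graph (G,w) does not contain a cycle of total weight at most ℓ, then the number of nontrivial paths P in G with 2·w(P) ≤ ℓ (i.e., of weight at most ℓ/2) is at most n(n−1)/2. -/

import Mathlib

open SimpleGraph

private lemma sum_le_union_aux {α : Type*} [DecidableEq α] (w : α → ℕ) {L A B : List α}
    (hL : L.Nodup) (hA : A.Nodup) (hB : B.Nodup) (hsub : ∀ x ∈ L, x ∈ A ∨ x ∈ B) :
    (L.map w).sum ≤ (A.map w).sum + (B.map w).sum := by
  rw [← List.sum_toFinset _ hL, ← List.sum_toFinset _ hA, ← List.sum_toFinset _ hB]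
  calc ∑ x ∈ L.toFinset, w x
      ≤ ∑ x ∈ A.toFinset ∪ B.toFinset, w x := by
        apply Finset.sum_le_sum_of_subset
        intro x hx
        simp only [List.mem_toFinset, Finset.mem_union] at hx ⊢
        exact hsub x hx
    _ ≤ ∑ x ∈ A.toFinset ∪ B.toFinset, w x + ∑ x ∈ A.toFinset ∩ B.toFinset, w x :=
        Nat.le_add_right _ _
    _ = _ := Finset.sum_union_inter

private lemma exists_cycle_of_two_paths {V : Type*} {G : SimpleGraph V}
    {a b : V} (p q : G.Walk a b) (hp : p.IsPath) (hq : q.IsPath) (hne : p ≠ q) :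
    ∃ (v : V) (c : G.Walk v v), c.IsCycle ∧ ∀ e ∈ c.edges, e ∈ p.edges ∨ e ∈ q.edges := by
  classical
  set H : SimpleGraph V := SimpleGraph.fromEdgeSet {e | e ∈ p.edges ∨ e ∈ q.edges} with hH
  have hHG : H ≤ G := by
    intro x y hxy
    rw [hH, SimpleGraph.fromEdgeSet_adj] at hxy
    rcases hxy.1 with h | h
    · exact (SimpleGraph.mem_edgeSet G).mp (p.edges_subset_edgeSet h)
    · exact (SimpleGraph.mem_edgeSet G).mp (q.edges_subset_edgeSet h)
  have hpe : ∀ e ∈ p.edges, e ∈ H.edgeSet := by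
    intro e he
    rw [hH, SimpleGraph.edgeSet_fromEdgeSet]
    exact ⟨Or.inl he, G.not_isDiag_of_mem_edgeSet (p.edges_subset_edgeSet he)⟩
  have hqe : ∀ e ∈ q.edges, e ∈ H.edgeSet := by
    intro e he
    rw [hH, SimpleGraph.edgeSet_fromEdgeSet]
    exact ⟨Or.inr he, G.not_isDiag_of_mem_edgeSet (q.edges_subset_edgeSet he)⟩
  have hna : ¬ H.IsAcyclic := by
    intro hA
    have heq := (SimpleGraph.isAcyclic_iff_path_unique.mp hA)
      ⟨p.transfer H hpe, hp.transfer hpe⟩ ⟨q.transfer H hqe, hq.transfer hqe⟩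
    have heq' : p.transfer H hpe = q.transfer H hqe := congrArg Subtype.val heq
    apply hne
    have hback := congrArg (fun r : H.Walk a b =>
      r.transfer G (fun e he => (SimpleGraph.edgeSet_mono hHG) (r.edges_subset_edgeSet he))) heq'
    simpa only [Walk.transfer_transfer, Walk.transfer_self] using hback
  rw [SimpleGraph.IsAcyclic] at hna
  push_neg at hna
  obtain ⟨v, c, hc⟩ := hna
  refine ⟨v, c.mapLe hHG, hc.mapLe hHG, ?_⟩
  intro e he
  have he' : e ∈ c.edges := by
    simp_rw [Walk.mapLe, Walk.edges_map, List.mem_map, Hom.ofLE_apply,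
      Sym2.map_id', id] at he
    obtain ⟨e', he', rfl⟩ := he
    exact he'
  have := c.edges_subset_edgeSet he'
  rw [hH, SimpleGraph.edgeSet_fromEdgeSet] at this
  exact this.1

private lemma ne_of_path_pos {V : Type*} {G : SimpleGraph V} {a b : V} {p : G.Walk a b}
    (hp : p.IsPath) (hl : 0 < p.length) : a ≠ b := by
  cases p with
  | nil => simp at hl
  | cons h q =>
    rw [Walk.cons_isPath_iff] at hp
    intro hab
    exact hp.2 (hab ▸ q.end_mem_support)

private lemma path_eq_of_weights {V : Type*} {G : SimpleGraph V} {w : Sym2 V → ℕ} {ℓ : ℕ}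
    (hnc : ∀ (v : V) (c : G.Walk v v), c.IsCycle → ¬ ((c.edges.map w).sum ≤ ℓ))
    {a b : V} (p q : G.Walk a b) (hp : p.IsPath) (hq : q.IsPath)
    (hwp : 2 * (p.edges.map w).sum ≤ ℓ) (hwq : 2 * (q.edges.map w).sum ≤ ℓ) : p = q := by
  classical
  by_contra hne
  obtain ⟨v, c, hc, hsub⟩ := exists_cycle_of_two_paths p q hp hq hne
  refine hnc v c hc ?_
  calc (c.edges.map w).sum ≤ (p.edges.map w).sum + (q.edges.map w).sum :=
        sum_le_union_aux w hc.edges_nodup hp.edges_nodup hq.edges_nodup hsub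
    _ ≤ ℓ := by omega

/-- If a weighted `n`-vertex graph `(G, w)` (positive integer edge weights)
contains no cycle of total weight at most `ℓ`, then the number of nontrivial paths of weight
at most `ℓ/2` is at most `n(n-1)/2`.  Paths are counted as undirected objects: a path is
identified with the unordered pair `s(support, reversed support)` of its vertex sequences,
so a path and its reverse are counted once. -/
theorem stmt_1 {V : Type*} [Fintype V] [DecidableEq V]
    (G : SimpleGraph V) (w : Sym2 V → ℕ)
    (hw : ∀ e ∈ G.edgeSet, 0 < w e) (ℓ : ℕ)
    (hnc : ∀ (v : V) (c : G.Walk v v), c.IsCycle → ¬ ((c.edges.map w).sum ≤ ℓ)) :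
    Set.ncard {q : Sym2 (List V) |
        ∃ (a b : V) (p : G.Walk a b), p.IsPath ∧ 0 < p.length ∧
          2 * (p.edges.map w).sum ≤ ℓ ∧ q = s(p.support, p.support.reverse)} ≤
      Fintype.card V * (Fintype.card V - 1) / 2 := by
  classical
  cases isEmpty_or_nonempty V with
  | inl hV =>
    have hS : {q : Sym2 (List V) |
        ∃ (a b : V) (p : G.Walk a b), p.IsPath ∧ 0 < p.length ∧
          2 * (p.edges.map w).sum ≤ ℓ ∧ q = s(p.support, p.support.reverse)} = ∅ := by
      ext q
      simp only [Set.mem_setOf_eq, Set.mem_empty_iff_false, iff_false]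
      rintro ⟨a, -⟩
      exact hV.elim a
    rw [hS]
    simp
  | inr hV =>
    have : Inhabited V := Classical.inhabited_of_nonempty hV
    have hhead : ∀ (x y : V) (p : G.Walk x y), p.support.headI = x := by
      intro x y p
      rw [p.support_eq_cons]
      rfl
    have hcard : {e : Sym2 V | ¬ e.IsDiag}.ncard =
        Fintype.card V * (Fintype.card V - 1) / 2 := by
      rw [← Nat.card_coe_set_eq, Nat.card_eq_fintype_card, ← Nat.choose_two_right]
      exact Sym2.card_subtype_not_diag
    rw [← hcard]
    apply Set.ncard_le_ncard_of_injOn (Sym2.map List.headI)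
    · rintro q ⟨a, b, p, hp, hl, hwp, rfl⟩
      have h1 : p.support.headI = a := hhead a b p
      have h2 : p.support.reverse.headI = b := by
        rw [← p.support_reverse]; exact hhead b a p.reverse
      simp only [Set.mem_setOf_eq, Sym2.map_pair_eq, h1, h2, Sym2.mk_isDiag_iff]
      exact ne_of_path_pos hp hl
    · rintro q1 ⟨a1, b1, p1, hp1, hl1, hw1, rfl⟩ q2 ⟨a2, b2, p2, hp2, hl2, hw2, rfl⟩ heq
      have e1 : p1.support.reverse.headI = b1 := by
        rw [← p1.support_reverse]; exact hhead b1 a1 p1.reverse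
      have e2 : p2.support.reverse.headI = b2 := by
        rw [← p2.support_reverse]; exact hhead b2 a2 p2.reverse
      simp only [Sym2.map_pair_eq, hhead a1 b1 p1, hhead a2 b2 p2, e1, e2] at heq
      rw [Sym2.eq_iff] at heq
      rcases heq with ⟨rfl, rfl⟩ | ⟨h1, h2⟩
      · rw [path_eq_of_weights hnc p1 p2 hp1 hp2 hw1 hw2]
      · subst h1; subst h2
        have hw2' : 2 * (p2.reverse.edges.map w).sum ≤ ℓ := by
          rw [Walk.edges_reverse, List.map_reverse, List.sum_reverse]
          exact hw2
        have := path_eq_of_weights hnc p1 p2.reverse hp1 hp2.reverse hw1 hw2'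
        rw [this, Walk.support_reverse, List.reverse_reverse, Sym2.eq_swap]
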